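/- In the setting of the time-varying unitary extension with ξ(t+1) = F(t)ξ(t) + G(t)w(t), w̄(t) = H(t)ξ(t) + J(t)w(t), U(t) orthogonal, (w(t)) normalized white noise uncorrelated with ξ at the same time, and Φ(t+k, t) := F(t+k−1)···F(t): for all k ≥ 1, E[w̄(t+k) w̄(t)ᵀ] = H(t+k) Φ(t+k, t+1) (F(t) H(t)ᵀ + G(t) J(t)ᵀ) = 0, so w̄ is a white noise process. -/

import Mathlib

open Matrix MeasureTheory

/-- Cross-covariance matrix E[x yᵀ] of two (centered) random vectors. -/
noncomputable def cov {Ω : Type*} [MeasurableSpace Ω] (ℙ : Measure Ω) {n m : ℕ}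
    (x : Ω → Fin n → ℝ) (y : Ω → Fin m → ℝ) : Matrix (Fin n) (Fin m) ℝ :=
  Matrix.of fun i j => ∫ ω, x ω i * y ω j ∂ℙ

section helpers
variable {Ω : Type*} [MeasurableSpace Ω] {ℙ : Measure Ω}

lemma int_mul {f g : Ω → ℝ} (hf : MemLp f 2 ℙ) (hg : MemLp g 2 ℙ) :
    Integrable (fun ω => f ω * g ω) ℙ := by
  have h : MemLp (f • g) 1 ℙ := hg.smul hf (hpqr := ⟨by
    rw [inv_one]
    exact ENNReal.inv_two_add_inv_two⟩)
  exact memLp_one_iff_integrable.mp h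

lemma memℒp_mulVec {n m : ℕ} (A : Matrix (Fin m) (Fin n) ℝ) {x : Ω → Fin n → ℝ}
    (hx : ∀ i, MemLp (fun ω => x ω i) 2 ℙ) (i : Fin m) :
    MemLp (fun ω => A.mulVec (x ω) i) 2 ℙ := by
  simp only [Matrix.mulVec, dotProduct]
  have := memLp_finset_sum (μ := ℙ) (p := 2) Finset.univ
    (f := fun k ω => A i k * x ω k) (fun k _ => (hx k).const_mul (A i k))
  simpa using this

lemma cov_transpose {n m : ℕ} (x : Ω → Fin n → ℝ) (y : Ω → Fin m → ℝ) :
    (cov ℙ x y)ᵀ = cov ℙ y x := by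
  ext i j; simp [cov, mul_comm]

lemma cov_mulVec_left {n m q : ℕ} (A : Matrix (Fin q) (Fin n) ℝ) (x : Ω → Fin n → ℝ)
    (y : Ω → Fin m → ℝ) (hx : ∀ i, MemLp (fun ω => x ω i) 2 ℙ)
    (hy : ∀ j, MemLp (fun ω => y ω j) 2 ℙ) :
    cov ℙ (fun ω => A.mulVec (x ω)) y = A * cov ℙ x y := by
  ext i j
  have h1 : ∀ ω, A.mulVec (x ω) i * y ω j = ∑ k, A i k * (x ω k * y ω j) := by
    intro ω
    simp only [Matrix.mulVec, dotProduct, Finset.sum_mul, mul_assoc]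
  simp only [cov, Matrix.of_apply, Matrix.mul_apply]
  rw [show (fun ω => (fun ω' => A.mulVec (x ω') ) ω i * y ω j) = fun ω => ∑ k, A i k * (x ω k * y ω j) from funext h1]
  rw [integral_finset_sum _ (fun k _ => (int_mul (hx k) (hy j)).const_mul (A i k))]
  simp [integral_const_mul]

lemma cov_add_left {n m : ℕ} (a b : Ω → Fin n → ℝ) (y : Ω → Fin m → ℝ)
    (ha : ∀ i, MemLp (fun ω => a ω i) 2 ℙ) (hb : ∀ i, MemLp (fun ω => b ω i) 2 ℙ)
    (hy : ∀ j, MemLp (fun ω => y ω j) 2 ℙ) :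
    cov ℙ (fun ω => a ω + b ω) y = cov ℙ a y + cov ℙ b y := by
  ext i j
  simp only [cov, Matrix.of_apply, Matrix.add_apply, Pi.add_apply, add_mul]
  exact integral_add (int_mul (ha i) (hy j)) (int_mul (hb i) (hy j))

lemma cov_mulVec_right {n m q : ℕ} (B : Matrix (Fin q) (Fin m) ℝ) (x : Ω → Fin n → ℝ)
    (y : Ω → Fin m → ℝ) (hx : ∀ i, MemLp (fun ω => x ω i) 2 ℙ)
    (hy : ∀ j, MemLp (fun ω => y ω j) 2 ℙ) :
    cov ℙ x (fun ω => B.mulVec (y ω)) = cov ℙ x y * Bᵀ := by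
  have := congrArg Matrix.transpose (cov_mulVec_left (ℙ := ℙ) B y x hy hx)
  rw [cov_transpose, Matrix.transpose_mul, cov_transpose] at this
  exact this

lemma cov_add_right {n m : ℕ} (x : Ω → Fin n → ℝ) (a b : Ω → Fin m → ℝ)
    (hx : ∀ i, MemLp (fun ω => x ω i) 2 ℙ)
    (ha : ∀ i, MemLp (fun ω => a ω i) 2 ℙ) (hb : ∀ i, MemLp (fun ω => b ω i) 2 ℙ) :
    cov ℙ x (fun ω => a ω + b ω) = cov ℙ x a + cov ℙ x b := by
  have := congrArg Matrix.transpose (cov_add_left (ℙ := ℙ) a b x ha hb hx)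
  rw [cov_transpose, Matrix.transpose_add, cov_transpose, cov_transpose] at this
  exact this

end helpers

theorem stmt_15 {Ω : Type*} [MeasurableSpace Ω] (ℙ : Measure Ω) [IsProbabilityMeasure ℙ]
    {n p : ℕ} (F : ℤ → Matrix (Fin n) (Fin n) ℝ) (G : ℤ → Matrix (Fin n) (Fin p) ℝ)
    (H : ℤ → Matrix (Fin p) (Fin n) ℝ) (J : ℤ → Matrix (Fin p) (Fin p) ℝ)
    (horth1 : ∀ t : ℤ, Matrix.fromBlocks (F t) (G t) (H t) (J t) *
      (Matrix.fromBlocks (F t) (G t) (H t) (J t))ᵀ = 1)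
    (horth2 : ∀ t : ℤ, (Matrix.fromBlocks (F t) (G t) (H t) (J t))ᵀ *
      Matrix.fromBlocks (F t) (G t) (H t) (J t) = 1)
    (ξ : ℤ → Ω → Fin n → ℝ) (w wbar : ℤ → Ω → Fin p → ℝ)
    (hξ2 : ∀ t i, MemLp (fun ω => ξ t ω i) 2 ℙ)
    (hw2 : ∀ t i, MemLp (fun ω => w t ω i) 2 ℙ)
    (hwhite : ∀ t s : ℤ, cov ℙ (w t) (w s) = if t = s then 1 else 0)
    (hξnorm : ∀ t : ℤ, cov ℙ (ξ t) (ξ t) = 1)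
    (hξw : ∀ t s : ℤ, t ≤ s → cov ℙ (ξ t) (w s) = 0)
    (hdyn : ∀ t : ℤ, ξ (t + 1) = fun ω => (F t).mulVec (ξ t ω) + (G t).mulVec (w t ω))
    (hout : ∀ t : ℤ, wbar t = fun ω => (H t).mulVec (ξ t ω) + (J t).mulVec (w t ω))
    -- the state-transition matrix Φ(s + k, s), recursively in the number of steps k:
    (Φ : ℤ → ℕ → Matrix (Fin n) (Fin n) ℝ)
    (hΦ0 : ∀ s : ℤ, Φ s 0 = 1)
    (hΦ : ∀ (s : ℤ) (k : ℕ), Φ s (k + 1) = F (s + k) * Φ s k)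
    (t : ℤ) :
    ∀ k : ℕ, cov ℙ (wbar (t + k + 1)) (wbar t) =
        H (t + k + 1) * Φ (t + 1) k * (F t * (H t)ᵀ + G t * (J t)ᵀ) ∧
      H (t + k + 1) * Φ (t + 1) k * (F t * (H t)ᵀ + G t * (J t)ᵀ) = 0 := by
  -- F t * (H t)ᵀ + G t * (J t)ᵀ = 0 from orthogonality
  have hM0 : F t * (H t)ᵀ + G t * (J t)ᵀ = 0 := by
    have h1 := horth1 t
    rw [Matrix.fromBlocks_transpose, Matrix.fromBlocks_multiply, ← Matrix.fromBlocks_one] at h1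
    exact (Matrix.fromBlocks_inj.mp h1).2.1
  -- L² facts
  have hwbar2 : ∀ i, MemLp (fun ω => wbar t ω i) 2 ℙ := by
    rw [hout t]; intro i
    exact (memℒp_mulVec (H t) (hξ2 t) i).add (memℒp_mulVec (J t) (hw2 t) i)
  -- cov (w s) (wbar t) = 0 for t < s
  have hwwbar : ∀ s : ℤ, t < s → cov ℙ (w s) (wbar t) = 0 := by
    intro s hs
    rw [hout t, cov_add_right _ _ _ (hw2 s) (memℒp_mulVec (H t) (hξ2 t)) (memℒp_mulVec (J t) (hw2 t)),
      cov_mulVec_right _ _ _ (hw2 s) (hξ2 t), cov_mulVec_right _ _ _ (hw2 s) (hw2 t)]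
    have h1 : cov ℙ (w s) (ξ t) = 0 := by
      rw [← cov_transpose, hξw t s hs.le]; simp
    have h2 : cov ℙ (w s) (w t) = 0 := by rw [hwhite s t, if_neg hs.ne']
    rw [h1, h2]; simp
  -- cov (ξ t) (wbar t) = (H t)ᵀ and cov (w t) (wbar t) = (J t)ᵀ
  have hξwbar0 : cov ℙ (ξ t) (wbar t) = (H t)ᵀ := by
    rw [hout t, cov_add_right _ _ _ (hξ2 t) (memℒp_mulVec (H t) (hξ2 t)) (memℒp_mulVec (J t) (hw2 t)),
      cov_mulVec_right _ _ _ (hξ2 t) (hξ2 t), cov_mulVec_right _ _ _ (hξ2 t) (hw2 t),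
      hξnorm t, hξw t t le_rfl]
    simp
  have hwwbar0 : cov ℙ (w t) (wbar t) = (J t)ᵀ := by
    rw [hout t, cov_add_right _ _ _ (hw2 t) (memℒp_mulVec (H t) (hξ2 t)) (memℒp_mulVec (J t) (hw2 t)),
      cov_mulVec_right _ _ _ (hw2 t) (hξ2 t), cov_mulVec_right _ _ _ (hw2 t) (hw2 t),
      hwhite t t, if_pos rfl]
    have h1 : cov ℙ (w t) (ξ t) = 0 := by
      rw [← cov_transpose, hξw t t le_rfl]; simp
    rw [h1]; simp
  -- by induction: cov (ξ (t + k + 1)) (wbar t) = 0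
  have hkey : ∀ k : ℕ, cov ℙ (ξ (t + k + 1)) (wbar t) = 0 := by
    intro k
    induction k with
    | zero =>
      have e : (t + (0 : ℕ) + 1 : ℤ) = t + 1 := by push_cast; ring
      rw [e, hdyn t,
        cov_add_left _ _ _ (memℒp_mulVec (F t) (hξ2 t)) (memℒp_mulVec (G t) (hw2 t)) hwbar2,
        cov_mulVec_left _ _ _ (hξ2 t) hwbar2, cov_mulVec_left _ _ _ (hw2 t) hwbar2,
        hξwbar0, hwwbar0, hM0]
    | succ k ih =>
      have e : (t + (k + 1 : ℕ) + 1 : ℤ) = (t + k + 1) + 1 := by push_cast; ring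
      rw [e, hdyn (t + k + 1),
        cov_add_left _ _ _ (memℒp_mulVec _ (hξ2 _)) (memℒp_mulVec _ (hw2 _)) hwbar2,
        cov_mulVec_left _ _ _ (hξ2 _) hwbar2, cov_mulVec_left _ _ _ (hw2 _) hwbar2,
        ih, hwwbar (t + k + 1) (by omega)]
      simp
  intro k
  have hRHS : H (t + k + 1) * Φ (t + 1) k * (F t * (H t)ᵀ + G t * (J t)ᵀ) = 0 := by
    rw [hM0, Matrix.mul_zero]
  refine ⟨?_, hRHS⟩
  rw [hRHS, hout (t + k + 1),
    cov_add_left _ _ _ (memℒp_mulVec _ (hξ2 _)) (memℒp_mulVec _ (hw2 _)) hwbar2,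
    cov_mulVec_left _ _ _ (hξ2 _) hwbar2, cov_mulVec_left _ _ _ (hw2 _) hwbar2,
    hkey k, hwwbar (t + k + 1) (by omega)]
  simp
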